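/- Any oblique decision tree of depth T (a piecewise constant function defined by recursive halfspace splits) can be represented by a canonical locally constant network with one hidden layer of 2^T − 1 ReLU neurons: there exist weights W ∈ ℝ^{(2^T−1)×D}, biases b ∈ ℝ^{2^T−1}, and a table g : {0,1}^{2^T−1} → ℝ^L such that for all x ∈ ℝ^D, g applied to the activation pattern (𝟙[W_k x + b_k ≥ 0])_k equals the tree's output at x. -/

import Mathlib

/-- Binary value of a bit string (most significant bit first). -/
def bval (s : List Bool) : ℕ := s.foldl (fun n b => 2 * n + b.toNat) 0

/-- Complete-binary-tree index of a bit string. -/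
def enc (s : List Bool) : ℕ := 2 ^ s.length - 1 + bval s

lemma bval_append (s : List Bool) (b : Bool) :
    bval (s ++ [b]) = 2 * bval s + b.toNat := by
  simp [bval, List.foldl_append]

lemma bval_lt (s : List Bool) : bval s < 2 ^ s.length := by
  induction s using List.reverseRecOn with
  | nil => simp [bval]
  | append_singleton s b ih =>
      rw [bval_append]
      have hb : b.toNat < 2 := by cases b <;> simp
      simp only [List.length_append, List.length_singleton, pow_succ]
      omega

lemma enc_lt {s : List Bool} {T : ℕ} (h : s.length < T) : enc s < 2 ^ T - 1 := by
  have h1 := bval_lt s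
  have h2 : 2 ^ (s.length + 1) ≤ 2 ^ T := Nat.pow_le_pow_right (by norm_num) h
  have h3 : 0 < 2 ^ s.length := Nat.pow_pos (by norm_num)
  unfold enc
  rw [pow_succ] at h2
  omega

lemma enc_mono {s t : List Bool} (h : s.length < t.length) : enc s < enc t := by
  have h1 := enc_lt (T := t.length) h
  have h2 : enc t = 2 ^ t.length - 1 + bval t := rfl
  omega

lemma bval_inj : ∀ {s t : List Bool}, s.length = t.length → bval s = bval t → s = t := by
  intro s
  induction s using List.reverseRecOn with
  | nil =>
      intro t ht _
      exact (List.length_eq_zero_iff.mp ht.symm).symm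
  | append_singleton s b ih =>
      intro t ht hv
      induction t using List.reverseRecOn with
      | nil => simp at ht
      | append_singleton t c _ =>
          rw [bval_append, bval_append] at hv
          simp only [List.length_append, List.length_singleton] at ht
          have hb : b.toNat < 2 := by cases b <;> simp
          have hc : c.toNat < 2 := by cases c <;> simp
          have h1 : bval s = bval t := by omega
          have h2 : b.toNat = c.toNat := by omega
          have h3 : b = c := by cases b <;> cases c <;> simp_all
          rw [ih (by omega) h1, h3]

lemma enc_inj : Function.Injective enc := by
  intro s t h
  have hlen : s.length = t.length := by
    rcases lt_trichotomy s.length t.length with h1 | h1 | h1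
    · exact absurd h (ne_of_lt (enc_mono h1))
    · exact h1
    · exact absurd h.symm (ne_of_lt (enc_mono h1))
  apply bval_inj hlen
  unfold enc at h
  rw [hlen] at h
  have h3 : 0 < 2 ^ t.length := Nat.pow_pos (by norm_num)
  omega

open Classical in
/-- Partial inverse of `enc`. -/
noncomputable def dec (n : ℕ) : List Bool :=
  if h : ∃ s, enc s = n then h.choose else []

lemma dec_enc (s : List Bool) : dec (enc s) = s := by
  have h : ∃ t, enc t = enc s := ⟨s, rfl⟩
  rw [dec]
  rw [dif_pos h]
  exact enc_inj h.choose_spec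

/-- The root-to-depth-`i` decision pattern of an oblique decision tree with
decision weights `ω` and biases `β` indexed by binary decision prefixes. -/
noncomputable def treePath {D : ℕ} (ω : List Bool → (Fin D → ℝ)) (β : List Bool → ℝ)
    (x : Fin D → ℝ) : ℕ → List Bool
  | 0 => []
  | (i + 1) =>
      let s := treePath ω β x i
      s ++ [if 0 ≤ ∑ j, ω s j * x j + β s then true else false]

lemma treePath_length {D : ℕ} (ω : List Bool → (Fin D → ℝ)) (β : List Bool → ℝ)
    (x : Fin D → ℝ) (i : ℕ) : (treePath ω β x i).length = i := by
  induction i with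
  | zero => rfl
  | succ i ih => simp [treePath, ih]

/-- Reconstruct the decision path from the activation pattern. -/
noncomputable def patt {T : ℕ} (a : Fin (2 ^ T - 1) → Bool) : ℕ → List Bool
  | 0 => []
  | (i + 1) =>
      let s := patt a i
      s ++ [if h : enc s < 2 ^ T - 1 then a ⟨enc s, h⟩ else false]

/-- any oblique decision tree of depth T can be represented by a
canonical locally constant network with one hidden layer of 2^T − 1 neurons. -/
theorem tree_to_locally_constant_network {D L T : ℕ}
    (ω : List Bool → (Fin D → ℝ)) (β : List Bool → ℝ)
    (v : List Bool → (Fin L → ℝ)) :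
    ∃ (W : Fin (2 ^ T - 1) → (Fin D → ℝ)) (b : Fin (2 ^ T - 1) → ℝ)
      (g : (Fin (2 ^ T - 1) → Bool) → (Fin L → ℝ)),
      ∀ x : Fin D → ℝ,
        g (fun k => if 0 ≤ ∑ j, W k j * x j + b k then true else false)
          = v (treePath ω β x T) := by
  refine ⟨fun k => ω (dec k), fun k => β (dec k), fun a => v (patt a T), fun x => ?_⟩
  set a : Fin (2 ^ T - 1) → Bool :=
    fun k => if 0 ≤ ∑ j, ω (dec k) j * x j + β (dec k) then true else false with ha
  have key : ∀ i, i ≤ T → patt a i = treePath ω β x i := by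
    intro i
    induction i with
    | zero => intro _; rfl
    | succ i ih =>
        intro hi
        have hprev := ih (by omega)
        have hlen : (treePath ω β x i).length = i := treePath_length ω β x i
        have hlt : enc (treePath ω β x i) < 2 ^ T - 1 := enc_lt (by omega)
        show (patt a i) ++ _ = (treePath ω β x i) ++ _
        rw [hprev]
        congr 1
        rw [dif_pos hlt]
        simp only [ha, dec_enc]
  show v (patt a T) = v (treePath ω β x T)
  rw [key T le_rfl]
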